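/- Let c ∈ B_r(ā) ⊂ ℓ¹_ν × ℓ¹_ν and let DF be the derivative of the Cauchy-Riemann map F whose only nonlinearity is the cubic term −λ(a₁∗a₁∗a₁). Then ‖[DF(c) − DF(ā)]h‖ ≤ 3|λ| · r · (r + 2‖ā₁‖_{1,ν}) · ‖h‖ for all h, where ‖·‖ is the max of the component ℓ¹_ν norms; in particular the Lipschitz bound Z₂ = 3|λ|‖A‖(1 + 2‖ā₁‖_{1,ν}) is valid for r ≤ 1. -/

import Mathlib

/-- Membership in `ℓ¹_ν`. -/
def memL1 (ν : ℝ) (a : ℕ → ℝ) : Prop := Summable (fun k : ℕ => |a k| * ν ^ k)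

/-- The weighted `ℓ¹_ν` norm `‖a‖ = |a₀| + 2∑_{k≥1}|a_k|ν^k`. -/
noncomputable def wnorm (ν : ℝ) (a : ℕ → ℝ) : ℝ :=
  |a 0| + 2 * ∑' k : ℕ, |a (k + 1)| * ν ^ (k + 1)

/-- Symmetrized discrete convolution. -/
noncomputable def conv (a b : ℕ → ℝ) (k : ℕ) : ℝ :=
  ∑' j : ℤ, a j.natAbs * b ((k : ℤ) - j).natAbs

noncomputable def SZ (ν : ℝ) (a : ℕ → ℝ) : ℤ → ℝ := fun j => |a j.natAbs| * ν ^ j.natAbs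

lemma SZ_nonneg {ν : ℝ} (hν : 1 ≤ ν) (a : ℕ → ℝ) (j : ℤ) : 0 ≤ SZ ν a j :=
  mul_nonneg (abs_nonneg _) (pow_nonneg (by linarith) _)

lemma summable_SZ {ν : ℝ} {a : ℕ → ℝ}
    (ha : Summable (fun k : ℕ => |a k| * ν ^ k)) : Summable (SZ ν a) := by
  apply Summable.of_nat_of_neg
  · simpa [SZ] using ha
  · simpa [SZ] using ha

lemma summable_SZ_nat {ν : ℝ} {a : ℕ → ℝ} (ha : Summable (SZ ν a)) :
    Summable (fun n : ℕ => SZ ν a n) :=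
  ha.comp_injective (fun x y h => by exact_mod_cast h)

lemma wnorm_eq_SZ {ν : ℝ} {a : ℕ → ℝ} (ha : Summable (SZ ν a)) :
    wnorm ν a = ∑' j : ℤ, SZ ν a j := by
  have h1 : Summable (fun n : ℕ => SZ ν a n) := summable_SZ_nat ha
  have h2 : Summable (fun n : ℕ => SZ ν a (-(n + 1))) :=
    ha.comp_injective (fun x y h => by omega)
  rw [tsum_of_nat_of_neg_add_one h1 h2, Summable.tsum_eq_zero_add h1]
  have e1 : ∀ n : ℕ, SZ ν a ((n : ℤ) + 1) = |a (n + 1)| * ν ^ (n + 1) := by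
    intro n
    have h : ((n : ℤ) + 1).natAbs = n + 1 := by omega
    simp only [SZ]; rw [h]
  have e2 : ∀ n : ℕ, SZ ν a (-((n : ℤ) + 1)) = |a (n + 1)| * ν ^ (n + 1) := by
    intro n
    have h : (-((n : ℤ) + 1)).natAbs = n + 1 := by omega
    simp only [SZ]; rw [h]
  rw [tsum_congr (fun n => by rw [show (((n+1:ℕ)):ℤ) = (n:ℤ)+1 by push_cast; ring, e1 n]),
    tsum_congr e2]
  simp [SZ, wnorm]
  ring

lemma abs_le_S {ν : ℝ} {a : ℕ → ℝ} (hν : 1 ≤ ν) (ha : Summable (SZ ν a)) (m : ℕ) :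
    |a m| ≤ ∑' j : ℤ, SZ ν a j := by
  calc |a m| ≤ |a m| * ν ^ m :=
        le_mul_of_one_le_right (abs_nonneg _) (one_le_pow₀ hν)
    _ = SZ ν a (m : ℤ) := by simp [SZ]
    _ ≤ ∑' j : ℤ, SZ ν a j := Summable.le_tsum ha _ (fun j _ => SZ_nonneg hν a j)

lemma conv_inner_summable_abs {ν : ℝ} {a b : ℕ → ℝ} (hν : 1 ≤ ν)
    (ha : Summable (SZ ν a)) (hb : Summable (SZ ν b)) (k : ℤ) :
    Summable (fun j : ℤ => |a j.natAbs * b (k - j).natAbs|) := by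
  set M := ∑' j : ℤ, SZ ν b j with hM
  have hM0 : 0 ≤ M := tsum_nonneg (SZ_nonneg hν b)
  apply Summable.of_nonneg_of_le (fun j => abs_nonneg _) (fun j => ?_) (ha.mul_right M)
  rw [abs_mul]
  calc |a j.natAbs| * |b (k - j).natAbs| ≤ |a j.natAbs| * M :=
        mul_le_mul_of_nonneg_left (abs_le_S hν hb _) (abs_nonneg _)
    _ ≤ SZ ν a j * M := by
        apply mul_le_mul_of_nonneg_right _ hM0
        exact le_mul_of_one_le_right (abs_nonneg _) (one_le_pow₀ hν)

lemma conv_inner_summable {ν : ℝ} {a b : ℕ → ℝ} (hν : 1 ≤ ν)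
    (ha : Summable (SZ ν a)) (hb : Summable (SZ ν b)) (k : ℤ) :
    Summable (fun j : ℤ => a j.natAbs * b (k - j).natAbs) :=
  (conv_inner_summable_abs hν ha hb k).of_abs

noncomputable def Cfun (a b : ℕ → ℝ) (k : ℤ) : ℝ := ∑' j : ℤ, a j.natAbs * b (k - j).natAbs

lemma conv_eq_Cfun (a b : ℕ → ℝ) (m : ℕ) : conv a b m = Cfun a b m := rfl

lemma Cfun_neg (a b : ℕ → ℝ) (k : ℤ) : Cfun a b (-k) = Cfun a b k := by
  unfold Cfun
  rw [← (Equiv.neg ℤ).tsum_eq (fun j : ℤ => a j.natAbs * b (-k - j).natAbs)]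
  apply tsum_congr
  intro j
  simp only [Equiv.neg_apply]
  rw [show (-k - -j) = -(k - j) by ring, Int.natAbs_neg, Int.natAbs_neg]

lemma Cfun_natAbs (a b : ℕ → ℝ) (k : ℤ) : Cfun a b (k.natAbs : ℤ) = Cfun a b k := by
  rcases Int.natAbs_eq k with h | h
  · rw [← h]
  · rw [show ((k.natAbs : ℤ)) = -k by omega, Cfun_neg]

lemma Cfun_comm {x y : ℕ → ℝ} (k : ℤ) : Cfun x y k = Cfun y x k := by
  unfold Cfun
  rw [← (Equiv.subLeft k).tsum_eq (fun j : ℤ => x j.natAbs * y (k - j).natAbs)]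
  apply tsum_congr
  intro j
  simp only [Equiv.subLeft_apply]
  rw [show k - (k - j) = j by ring, mul_comm]

lemma key {ν : ℝ} {a b : ℕ → ℝ} (hν : 1 ≤ ν)
    (ha : Summable (SZ ν a)) (hb : Summable (SZ ν b)) :
    Summable (fun k : ℤ => |Cfun a b k| * ν ^ k.natAbs) ∧
    ∑' k : ℤ, |Cfun a b k| * ν ^ k.natAbs ≤ (∑' j : ℤ, SZ ν a j) * (∑' j : ℤ, SZ ν b j) := by
  have hν0 : (0:ℝ) ≤ ν := by linarith
  have hQ : Summable (fun p : ℤ × ℤ => SZ ν a p.1 * SZ ν b p.2) :=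
    ha.mul_of_nonneg hb (SZ_nonneg hν a) (SZ_nonneg hν b)
  let e : ℤ × ℤ ≃ ℤ × ℤ :=
    ⟨fun p => (p.2, p.1 - p.2), fun q => (q.1 + q.2, q.1),
      fun p => by simp, fun q => by simp⟩
  have hP : Summable (fun p : ℤ × ℤ => SZ ν a p.2 * SZ ν b (p.1 - p.2)) := by
    have := (Equiv.summable_iff e).mpr hQ
    exact this
  have hbd : ∀ k : ℤ, |Cfun a b k| * ν ^ k.natAbs ≤ ∑' j : ℤ, SZ ν a j * SZ ν b (k - j) := by
    intro k
    have hs := conv_inner_summable_abs hν ha hb k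
    have h1 : |Cfun a b k| ≤ ∑' j : ℤ, |a j.natAbs * b (k - j).natAbs| := by
      have := norm_tsum_le_tsum_norm (f := fun j : ℤ => a j.natAbs * b (k - j).natAbs)
        (by simpa only [Real.norm_eq_abs] using hs)
      simpa only [Real.norm_eq_abs, Cfun] using this
    calc |Cfun a b k| * ν ^ k.natAbs
        ≤ (∑' j : ℤ, |a j.natAbs * b (k - j).natAbs|) * ν ^ k.natAbs :=
          mul_le_mul_of_nonneg_right h1 (pow_nonneg hν0 _)
      _ = ∑' j : ℤ, |a j.natAbs * b (k - j).natAbs| * ν ^ k.natAbs := (tsum_mul_right).symm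
      _ ≤ ∑' j : ℤ, SZ ν a j * SZ ν b (k - j) := by
          apply Summable.tsum_le_tsum _ (hs.mul_right _) (hP.prod_factor k)
          intro j
          rw [abs_mul]
          have hk : k.natAbs ≤ j.natAbs + (k - j).natAbs := by omega
          calc |a j.natAbs| * |b (k - j).natAbs| * ν ^ k.natAbs
              ≤ |a j.natAbs| * |b (k - j).natAbs| * (ν ^ (j.natAbs + (k - j).natAbs)) := by
                apply mul_le_mul_of_nonneg_left (pow_le_pow_right₀ hν hk)
                  (mul_nonneg (abs_nonneg _) (abs_nonneg _))
            _ = SZ ν a j * SZ ν b (k - j) := by simp [SZ, pow_add]; ring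
  have houter : Summable (fun k : ℤ => ∑' j : ℤ, SZ ν a j * SZ ν b (k - j)) := hP.prod
  have hsum : Summable (fun k : ℤ => |Cfun a b k| * ν ^ k.natAbs) :=
    Summable.of_nonneg_of_le (fun k => mul_nonneg (abs_nonneg _) (pow_nonneg hν0 _)) hbd houter
  refine ⟨hsum, ?_⟩
  calc ∑' k : ℤ, |Cfun a b k| * ν ^ k.natAbs
      ≤ ∑' k : ℤ, ∑' j : ℤ, SZ ν a j * SZ ν b (k - j) := Summable.tsum_le_tsum hbd hsum houter
    _ = ∑' p : ℤ × ℤ, SZ ν a p.2 * SZ ν b (p.1 - p.2) := (Summable.tsum_prod hP).symm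
    _ = ∑' q : ℤ × ℤ, SZ ν a q.1 * SZ ν b q.2 := by
        rw [← e.tsum_eq (fun q : ℤ × ℤ => SZ ν a q.1 * SZ ν b q.2)]
        rfl
    _ = (∑' j : ℤ, SZ ν a j) * (∑' j : ℤ, SZ ν b j) := (Summable.tsum_mul_tsum ha hb hQ).symm

lemma summable_SZ_add {ν : ℝ} {x y : ℕ → ℝ} (hν : 1 ≤ ν)
    (hx : Summable (SZ ν x)) (hy : Summable (SZ ν y)) :
    Summable (SZ ν (fun n => x n + y n)) := by
  apply Summable.of_nonneg_of_le (SZ_nonneg hν _) (fun j => ?_) (hx.add hy)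
  simp only [SZ]
  rw [← add_mul]
  exact mul_le_mul_of_nonneg_right (abs_add_le _ _) (pow_nonneg (by linarith) _)

lemma summable_SZ_sub {ν : ℝ} {x y : ℕ → ℝ} (hν : 1 ≤ ν)
    (hx : Summable (SZ ν x)) (hy : Summable (SZ ν y)) :
    Summable (SZ ν (fun n => x n - y n)) := by
  apply Summable.of_nonneg_of_le (SZ_nonneg hν _) (fun j => ?_) (hx.add hy)
  simp only [SZ]
  rw [← add_mul]
  exact mul_le_mul_of_nonneg_right (abs_sub _ _) (pow_nonneg (by linarith) _)

lemma Cfun_sub_sq {ν : ℝ} {x y : ℕ → ℝ} (hν : 1 ≤ ν)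
    (hx : Summable (SZ ν x)) (hy : Summable (SZ ν y)) (k : ℤ) :
    Cfun (fun n => x n - y n) (fun n => x n + y n) k = Cfun x x k - Cfun y y k := by
  have hxx := conv_inner_summable hν hx hx k
  have hxy := conv_inner_summable hν hx hy k
  have hyx := conv_inner_summable hν hy hx k
  have hyy := conv_inner_summable hν hy hy k
  unfold Cfun
  have hpt : (fun j : ℤ => (x j.natAbs - y j.natAbs) * (x (k-j).natAbs + y (k-j).natAbs))
       = fun j => (x j.natAbs * x (k-j).natAbs + x j.natAbs * y (k-j).natAbs)
           - (y j.natAbs * x (k-j).natAbs + y j.natAbs * y (k-j).natAbs) := by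
    funext j; ring
  rw [hpt, Summable.tsum_sub (hxx.add hxy) (hyx.add hyy), Summable.tsum_add hxx hxy, Summable.tsum_add hyx hyy]
  have hc : (∑' j : ℤ, x j.natAbs * y (k-j).natAbs) = ∑' j : ℤ, y j.natAbs * x (k-j).natAbs :=
    Cfun_comm (x := x) (y := y) k
  rw [hc]; ring

lemma wnorm_smul (ν t : ℝ) (f : ℕ → ℝ) :
    wnorm ν (fun k => t * f k) = |t| * wnorm ν f := by
  unfold wnorm
  rw [tsum_congr (fun k : ℕ => by rw [abs_mul, mul_assoc] :
    ∀ k : ℕ, |t * f (k+1)| * ν ^ (k+1) = |t| * (|f (k+1)| * ν ^ (k+1))),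
    tsum_mul_left, abs_mul]
  ring

/-- The Lipschitz (Z₂) bound for the cubic Cauchy–Riemann nonlinearity: for
`c ∈ B_r(ā)`, the difference of derivatives, acting by
`([DF(c)−DF(ā)]h)_k = −3λ((c₁∗c₁ − ā₁∗ā₁)∗h₁)_k` on the first component and `0` on the
second, satisfies `‖[DF(c)−DF(ā)]h‖ ≤ 3|λ| r (r + 2‖ā₁‖) ‖h‖`; in particular for `r ≤ 1`
the bound `Z₂ = 3|λ|(1 + 2‖ā₁‖)` (times `r`) is valid. -/
theorem CR_Z2_bound (ν : ℝ) (hν : 1 ≤ ν) (lam r : ℝ) (hr : 0 ≤ r)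
    (abar1 abar2 c1 c2 : ℕ → ℝ)
    (habar1 : memL1 ν abar1) (habar2 : memL1 ν abar2)
    (hc1 : memL1 ν c1) (hc2 : memL1 ν c2)
    (hdist1 : wnorm ν (c1 - abar1) ≤ r) (hdist2 : wnorm ν (c2 - abar2) ≤ r) :
    (∀ h1 h2 : ℕ → ℝ, memL1 ν h1 → memL1 ν h2 →
      wnorm ν (fun k =>
          -3 * lam * conv (fun j => conv c1 c1 j - conv abar1 abar1 j) h1 k)
        ≤ 3 * |lam| * r * (r + 2 * wnorm ν abar1) * max (wnorm ν h1) (wnorm ν h2)) ∧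
    (r ≤ 1 →
      3 * |lam| * r * (r + 2 * wnorm ν abar1)
        ≤ (3 * |lam| * (1 + 2 * wnorm ν abar1)) * r) := by
  have hSa : Summable (SZ ν abar1) := summable_SZ habar1
  have hSc : Summable (SZ ν c1) := summable_SZ hc1
  have hw0 : 0 ≤ wnorm ν abar1 := by
    rw [wnorm_eq_SZ hSa]; exact tsum_nonneg (SZ_nonneg hν _)
  constructor
  · intro h1 h2 hh1 hh2
    have hSh1 : Summable (SZ ν h1) := summable_SZ hh1
    set u : ℕ → ℝ := fun n => c1 n - abar1 n with hu_def
    set v : ℕ → ℝ := fun n => c1 n + abar1 n with hv_def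
    have hSu : Summable (SZ ν u) := summable_SZ_sub hν hSc hSa
    have hSv : Summable (SZ ν v) := summable_SZ_add hν hSc hSa
    set d : ℕ → ℝ := fun j => conv c1 c1 j - conv abar1 abar1 j with hd_def
    have hkey_uv := key hν hSu hSv
    have hdSZ : SZ ν d = fun j : ℤ => |Cfun u v j| * ν ^ j.natAbs := by
      funext j
      simp only [SZ, hd_def]
      rw [conv_eq_Cfun, conv_eq_Cfun, Cfun_natAbs, Cfun_natAbs,
        ← Cfun_sub_sq hν hSc hSa j]
    have hSd : Summable (SZ ν d) := by rw [hdSZ]; exact hkey_uv.1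
    have hkey_dh := key hν hSd hSh1
    have hconvSZ : SZ ν (conv d h1) = fun j : ℤ => |Cfun d h1 j| * ν ^ j.natAbs := by
      funext j
      simp only [SZ]
      rw [conv_eq_Cfun, Cfun_natAbs]
    have hSconv : Summable (SZ ν (conv d h1)) := by rw [hconvSZ]; exact hkey_dh.1
    -- norm bounds
    have hSu_le : (∑' j : ℤ, SZ ν u j) ≤ r := by
      have : wnorm ν (c1 - abar1) = ∑' j : ℤ, SZ ν u j := wnorm_eq_SZ hSu
      linarith [hdist1]
    have hSv_le : (∑' j : ℤ, SZ ν v j) ≤ r + 2 * wnorm ν abar1 := by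
      have hpt : ∀ j : ℤ, SZ ν v j ≤ SZ ν u j + 2 * SZ ν abar1 j := by
        intro j
        simp only [SZ, hu_def, hv_def]
        have h1' : |c1 j.natAbs + abar1 j.natAbs| ≤ |c1 j.natAbs - abar1 j.natAbs|
            + 2 * |abar1 j.natAbs| := by
          have := abs_add_le (c1 j.natAbs - abar1 j.natAbs) (2 * abar1 j.natAbs)
          rw [show c1 j.natAbs - abar1 j.natAbs + 2 * abar1 j.natAbs
            = c1 j.natAbs + abar1 j.natAbs by ring] at this
          simpa [abs_mul] using this
        calc |c1 j.natAbs + abar1 j.natAbs| * ν ^ j.natAbs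
            ≤ (|c1 j.natAbs - abar1 j.natAbs| + 2 * |abar1 j.natAbs|) * ν ^ j.natAbs :=
              mul_le_mul_of_nonneg_right h1' (pow_nonneg (by linarith) _)
          _ = |c1 j.natAbs - abar1 j.natAbs| * ν ^ j.natAbs
              + 2 * (|abar1 j.natAbs| * ν ^ j.natAbs) := by ring
      have hsum2 : Summable (fun j : ℤ => SZ ν u j + 2 * SZ ν abar1 j) :=
        hSu.add (hSa.mul_left 2)
      calc (∑' j : ℤ, SZ ν v j) ≤ ∑' j : ℤ, (SZ ν u j + 2 * SZ ν abar1 j) :=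
            Summable.tsum_le_tsum hpt hSv hsum2
        _ = (∑' j : ℤ, SZ ν u j) + 2 * ∑' j : ℤ, SZ ν abar1 j := by
            rw [Summable.tsum_add hSu (hSa.mul_left 2), tsum_mul_left]
        _ ≤ r + 2 * wnorm ν abar1 := by rw [wnorm_eq_SZ hSa]; linarith
    have hSv0 : 0 ≤ ∑' j : ℤ, SZ ν v j := tsum_nonneg (SZ_nonneg hν _)
    have hSh10 : 0 ≤ ∑' j : ℤ, SZ ν h1 j := tsum_nonneg (SZ_nonneg hν _)
    have hSd_le : (∑' j : ℤ, SZ ν d j) ≤ r * (r + 2 * wnorm ν abar1) := by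
      calc (∑' j : ℤ, SZ ν d j) = ∑' j : ℤ, |Cfun u v j| * ν ^ j.natAbs := by rw [hdSZ]
        _ ≤ (∑' j : ℤ, SZ ν u j) * (∑' j : ℤ, SZ ν v j) := hkey_uv.2
        _ ≤ r * (r + 2 * wnorm ν abar1) := mul_le_mul hSu_le hSv_le hSv0 hr
    have hSh1_le : (∑' j : ℤ, SZ ν h1 j) ≤ max (wnorm ν h1) (wnorm ν h2) := by
      rw [← wnorm_eq_SZ hSh1]; exact le_max_left _ _
    have hmain : wnorm ν (conv d h1)
        ≤ r * (r + 2 * wnorm ν abar1) * max (wnorm ν h1) (wnorm ν h2) := by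
      calc wnorm ν (conv d h1) = ∑' j : ℤ, SZ ν (conv d h1) j := wnorm_eq_SZ hSconv
        _ = ∑' j : ℤ, |Cfun d h1 j| * ν ^ j.natAbs := by rw [hconvSZ]
        _ ≤ (∑' j : ℤ, SZ ν d j) * (∑' j : ℤ, SZ ν h1 j) := hkey_dh.2
        _ ≤ r * (r + 2 * wnorm ν abar1) * max (wnorm ν h1) (wnorm ν h2) :=
            mul_le_mul hSd_le hSh1_le hSh10
              (mul_nonneg hr (by linarith))
    have hrw : wnorm ν (fun k => -3 * lam * conv d h1 k)
        = (3 * |lam|) * wnorm ν (conv d h1) := by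
      rw [wnorm_smul ν (-3 * lam) (conv d h1)]
      rw [abs_mul]
      norm_num
    calc wnorm ν (fun k => -3 * lam * conv d h1 k)
        = (3 * |lam|) * wnorm ν (conv d h1) := hrw
      _ ≤ (3 * |lam|) * (r * (r + 2 * wnorm ν abar1) * max (wnorm ν h1) (wnorm ν h2)) :=
          mul_le_mul_of_nonneg_left hmain (by positivity)
      _ = 3 * |lam| * r * (r + 2 * wnorm ν abar1) * max (wnorm ν h1) (wnorm ν h2) := by
          ring
  · intro hr1
    nlinarith [abs_nonneg lam, mul_nonneg (mul_nonneg (abs_nonneg lam) hr) (sub_nonneg.2 hr1),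
      mul_nonneg (mul_nonneg (mul_nonneg (abs_nonneg lam) hr) (sub_nonneg.2 hr1)) hw0]
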